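/- Every line of PG(2,q) is a ghost, i.e., the sum of the (q-1)-th powers of the Rédei factors of the q+1 points of a line is the zero polynomial. -/

import Mathlib

open MvPolynomial
open scoped LinearAlgebra.Projectivization

/-- The Rédei factor of a point of `PG(n,q)`. -/
noncomputable def redeiFactor {F : Type*} [Field F] {n : ℕ}
    (P : ℙ F (Fin n → F)) : MvPolynomial (Fin n) F :=
  ∑ i, C (P.rep i) * X i

/-- The power sum polynomial of a finite set of points of `PG(n,q)`. -/
noncomputable def powerSum {F : Type*} [Field F] [Fintype F] {n : ℕ}
    (S : Finset (ℙ F (Fin n → F))) : MvPolynomial (Fin n) F :=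
  ∑ P ∈ S, redeiFactor P ^ (Fintype.card F - 1)


/-- The line of PG(2,q) with Plücker coordinates ℓ, as a finite set of points. -/
noncomputable def lineFinset {F : Type*} [Field F] [DecidableEq F]
    [Fintype (ℙ F (Fin 3 → F))] (ℓ : Fin 3 → F) : Finset (ℙ F (Fin 3 → F)) :=
  Finset.univ.filter fun P => ∑ i, ℓ i * P.rep i = 0

section Aux

variable {F : Type*} [Field F] [Fintype F] [DecidableEq F]

/-- The dot-product linear functional. -/
noncomputable def dotL (ℓ : Fin 3 → F) : (Fin 3 → F) →ₗ[F] F where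
  toFun v := ∑ i, ℓ i * v i
  map_add' v w := by simp [mul_add, Finset.sum_add_distrib]
  map_smul' c v := by
    simp [Finset.mul_sum, smul_eq_mul]
    ring_nf
    simp [mul_comm, mul_left_comm]

lemma dotL_apply (ℓ v : Fin 3 → F) : dotL ℓ v = ∑ i, ℓ i * v i := rfl

/-- Cardinalities of kernels of maps into a small space vanish in `F`. -/
lemma card_ker_cast_zero {W : Type*} [AddCommGroup W] [Module F W]
    [FiniteDimensional F W] (hW : Module.finrank F W < 3)
    (φ : (Fin 3 → F) →ₗ[F] W) [DecidablePred fun v : Fin 3 → F => φ v = 0] :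
    ((Finset.univ.filter fun v : Fin 3 → F => φ v = 0).card : F) = 0 := by
  classical
  have hcard : (Finset.univ.filter fun v : Fin 3 → F => φ v = 0).card
      = Fintype.card (LinearMap.ker φ) := by
    rw [Fintype.card_of_subtype]
    intro v
    simp [LinearMap.mem_ker]
  have hpow : Fintype.card (LinearMap.ker φ)
      = Fintype.card F ^ Module.finrank F (LinearMap.ker φ) :=
    Module.card_eq_pow_finrank
  have hrank : 1 ≤ Module.finrank F (LinearMap.ker φ) := by
    have h1 : Module.finrank F (LinearMap.range φ)
        + Module.finrank F (LinearMap.ker φ) = Module.finrank F (Fin 3 → F) :=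
      LinearMap.finrank_range_add_finrank_ker φ
    have h2 : Module.finrank F (LinearMap.range φ) ≤ Module.finrank F W :=
      Submodule.finrank_le _
    have h3 : Module.finrank F (Fin 3 → F) = 3 := by
      simp [Module.finrank_fintype_fun_eq_card]
    omega
  rw [hcard, hpow, Nat.cast_pow, FiniteField.cast_card_eq_zero]
  exact zero_pow (by omega)

end Aux


/-- Universe-polymorphic version of `MvPolynomial.eq_zero_of_eval_eq_zero`. -/
lemma eq_zero_of_eval_eq_zero' {K : Type*} [Field K] [Fintype K] {n : ℕ}
    (p : MvPolynomial (Fin n) K) (h : ∀ v : Fin n → K, eval v p = 0)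
    (hd : ∀ s ∈ p.support, ∀ i, s i ≤ Fintype.card K - 1) : p = 0 := by
  classical
  set e : Fin n → ULift (Fin n) := fun i => ULift.up i with he
  have hinj : Function.Injective e := fun a b hab => congrArg ULift.down hab
  have hren : rename e p = 0 := by
    apply MvPolynomial.eq_zero_of_eval_eq_zero (ULift (Fin n)) K
    · intro v
      rw [eval_rename]
      exact h _
    · rw [MvPolynomial.mem_restrictDegree]
      intro s hs j
      rw [MvPolynomial.support_rename_of_injective hinj, Finset.mem_image] at hs
      obtain ⟨t, ht, rfl⟩ := hs
      have : j = e j.down := rfl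
      rw [this, Finsupp.mapDomain_apply hinj]
      exact hd t ht j.down
  have := rename_injective (R := K) e hinj
  have h0 : rename e p = rename e 0 := by simpa using hren
  exact this h0

/-- Every line of PG(2,q) is a ghost. -/
theorem line_ghost {F : Type*} [Field F] [Fintype F] [DecidableEq F]
    [Fintype (ℙ F (Fin 3 → F))] (ℓ : Fin 3 → F) (hℓ : ℓ ≠ 0) :
    powerSum (lineFinset ℓ) = 0 := by
  classical
  set q := Fintype.card F with hq
  have hq1 : 1 < q := Fintype.one_lt_card
  have hk : q - 1 ≠ 0 := by omega
  -- reduce to evaluation at all points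
  refine eq_zero_of_eval_eq_zero' (powerSum (lineFinset ℓ)) ?_ ?_
  · intro x
    -- evaluate the power sum
    have heval : eval x (powerSum (lineFinset ℓ))
        = ∑ P ∈ lineFinset ℓ, (∑ i, P.rep i * x i) ^ (q - 1) := by
      simp [powerSum, redeiFactor, hq]
    rw [heval]
    -- the nonzero scalars
    set T : Finset F := Finset.univ.filter (fun c : F => c ≠ 0) with hT
    have hTcard : (T.card : F) = -1 := by
      have : T = ({0}ᶜ : Finset F) := by
        ext c; simp [hT]
      rw [this, Finset.card_compl, Finset.card_singleton]
      rw [Nat.cast_sub (by omega : 1 ≤ Fintype.card F), FiniteField.cast_card_eq_zero]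
      ring
    -- sum over nonzero vectors of the kernel
    set S : Finset (Fin 3 → F) :=
      Finset.univ.filter (fun v : Fin 3 → F => (∑ i, ℓ i * v i) = 0 ∧ v ≠ 0) with hS
    have hbij : ∑ p ∈ (lineFinset ℓ) ×ˢ T, (∑ i, (p.2 • p.1.rep) i * x i) ^ (q - 1)
        = ∑ v ∈ S, (∑ i, v i * x i) ^ (q - 1) := by
      apply Finset.sum_bij (fun p _ => p.2 • p.1.rep)
      · rintro ⟨P, c⟩ hp
        rw [Finset.mem_product] at hp
        obtain ⟨hP, hc⟩ := hp
        rw [lineFinset, Finset.mem_filter] at hP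
        rw [hT, Finset.mem_filter] at hc
        rw [hS, Finset.mem_filter]
        refine ⟨Finset.mem_univ _, ?_, smul_ne_zero hc.2 P.rep_nonzero⟩
        simp only [Pi.smul_apply, smul_eq_mul]
        rw [Finset.sum_congr rfl (fun i _ => by ring : ∀ i ∈ Finset.univ,
          ℓ i * (c * P.rep i) = c * (ℓ i * P.rep i)), ← Finset.mul_sum, hP.2, mul_zero]
      · rintro ⟨P, c⟩ hp ⟨P', c'⟩ hp' h
        rw [Finset.mem_product, hT, Finset.mem_filter] at hp hp'
        have hc : c ≠ 0 := hp.2.2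
        have hc' : c' ≠ 0 := hp'.2.2
        have hPP : P = P' := by
          have h1 : Projectivization.mk F (c • P.rep)
              (smul_ne_zero hc P.rep_nonzero) = Projectivization.mk F (c' • P'.rep)
              (smul_ne_zero hc' P'.rep_nonzero) := by
            congr 1
          have h2 : Projectivization.mk F (c • P.rep)
              (smul_ne_zero hc P.rep_nonzero) = P := by
            conv_rhs => rw [← P.mk_rep]
            rw [Projectivization.mk_eq_mk_iff']
            exact ⟨c, rfl⟩
          have h3 : Projectivization.mk F (c' • P'.rep)
              (smul_ne_zero hc' P'.rep_nonzero) = P' := by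
            conv_rhs => rw [← P'.mk_rep]
            rw [Projectivization.mk_eq_mk_iff']
            exact ⟨c', rfl⟩
          rw [← h2, h1, h3]
        subst hPP
        have hcc : c = c' := by
          by_contra hne
          have : (c - c') • P.rep = 0 := by
            rw [sub_smul, h, sub_self]
          exact P.rep_nonzero ((smul_eq_zero.mp this).resolve_left (sub_ne_zero.mpr hne))
        rw [hcc]
      · intro v hv
        rw [hS, Finset.mem_filter] at hv
        obtain ⟨-, hv0, hvne⟩ := hv
        obtain ⟨a, ha⟩ := Projectivization.exists_smul_eq_mk_rep F v hvne
        refine ⟨⟨Projectivization.mk F v hvne, (a⁻¹ : Fˣ)⟩, ?_, ?_⟩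
        · rw [Finset.mem_product]
          constructor
          · rw [lineFinset, Finset.mem_filter]
            refine ⟨Finset.mem_univ _, ?_⟩
            rw [← ha]
            simp only [Units.smul_def, Pi.smul_apply, smul_eq_mul]
            rw [Finset.sum_congr rfl (fun i _ => by ring : ∀ i ∈ Finset.univ,
              ℓ i * ((a : F) * v i) = (a : F) * (ℓ i * v i)), ← Finset.mul_sum, hv0, mul_zero]
          · rw [hT, Finset.mem_filter]
            refine ⟨Finset.mem_univ _, ?_⟩
            show ((a⁻¹ : Fˣ) : F) ≠ 0
            exact Units.ne_zero _
        · show ((a⁻¹ : Fˣ) : F) • (Projectivization.mk F v hvne).rep = v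
          rw [← ha, Units.smul_def, smul_smul]
          simp
      · intros; rfl
    -- compute via the product
    have hprod : ∑ p ∈ (lineFinset ℓ) ×ˢ T, (∑ i, (p.2 • p.1.rep) i * x i) ^ (q - 1)
        = - ∑ P ∈ lineFinset ℓ, (∑ i, P.rep i * x i) ^ (q - 1) := by
      rw [Finset.sum_product]
      have : ∀ P ∈ lineFinset ℓ, ∑ c ∈ T, (∑ i, (c • P.rep) i * x i) ^ (q - 1)
          = - (∑ i, P.rep i * x i) ^ (q - 1) := by
        intro P _
        have hstep : ∀ c ∈ T, (∑ i, (c • P.rep) i * x i) ^ (q - 1)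
            = (∑ i, P.rep i * x i) ^ (q - 1) := by
          intro c hc
          rw [hT, Finset.mem_filter] at hc
          have : (∑ i, (c • P.rep) i * x i) = c * ∑ i, P.rep i * x i := by
            rw [Finset.mul_sum]
            exact Finset.sum_congr rfl fun i _ => by simp [mul_assoc]
          rw [this, mul_pow, FiniteField.pow_card_sub_one_eq_one c hc.2, one_mul]
        rw [Finset.sum_congr rfl hstep, Finset.sum_const, nsmul_eq_mul, hTcard]
        ring
      rw [Finset.sum_congr rfl this, Finset.sum_neg_distrib]
    -- sum over all kernel vectors
    set S0 : Finset (Fin 3 → F) :=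
      Finset.univ.filter (fun v : Fin 3 → F => (∑ i, ℓ i * v i) = 0) with hS0
    have hS_S0 : ∑ v ∈ S, (∑ i, v i * x i) ^ (q - 1)
        = ∑ v ∈ S0, (∑ i, v i * x i) ^ (q - 1) := by
      have : S = S0.filter (fun v => v ≠ 0) := by
        ext v; simp [hS, hS0, and_assoc]
      rw [this]
      apply Finset.sum_filter_of_ne
      intro v _ hvne
      rintro rfl
      simp [zero_pow hk] at hvne
    -- the sum over the kernel vanishes
    have hker : ∑ v ∈ S0, (∑ i, v i * x i) ^ (q - 1) = 0 := by
      have hpt : ∀ v ∈ S0, (∑ i, v i * x i) ^ (q - 1)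
          = if (∑ i, x i * v i) = 0 then 0 else 1 := by
        intro v _
        rw [Finset.sum_congr rfl (fun i _ => mul_comm (v i) (x i))]
        split_ifs with h
        · rw [h, zero_pow hk]
        · exact FiniteField.pow_card_sub_one_eq_one _ h
      rw [Finset.sum_congr rfl hpt]
      have hsplit : ∑ v ∈ S0, (if (∑ i, x i * v i) = 0 then (0 : F) else 1)
          = ((S0.filter fun v => ¬ (∑ i, x i * v i) = 0).card : F) := by
        rw [Finset.sum_ite, Finset.sum_const, Finset.sum_const]
        simp
      rw [hsplit]
      -- card arithmetic
      have hadd : (S0.filter fun v => (∑ i, x i * v i) = 0).card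
          + (S0.filter fun v => ¬ (∑ i, x i * v i) = 0).card = S0.card :=
        Finset.card_filter_add_card_filter_not _
      have hc0 : ((S0.card : F)) = 0 := by
        have := card_ker_cast_zero (F := F) (W := F)
          (by simp [Module.finrank_self]) (dotL ℓ)
        simp only [dotL_apply] at this
        rw [hS0]
        convert this
        ext v
        exact ⟨fun h => Finset.mem_filter.mpr ⟨Finset.mem_univ _, (Finset.mem_filter.mp h).2⟩,
          fun h => Finset.mem_filter.mpr ⟨Finset.mem_univ _, (Finset.mem_filter.mp h).2⟩⟩
      have hc1 : (((S0.filter fun v => (∑ i, x i * v i) = 0).card : F)) = 0 := by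
        have := card_ker_cast_zero (F := F) (W := Fin 2 → F)
          (by simp [Module.finrank_fintype_fun_eq_card])
          (LinearMap.pi ![dotL ℓ, dotL x])
        have hset : (Finset.univ.filter fun v : Fin 3 → F =>
            (LinearMap.pi ![dotL ℓ, dotL x]) v = 0)
            = S0.filter fun v => (∑ i, x i * v i) = 0 := by
          ext v
          simp only [Finset.mem_filter, Finset.mem_univ, true_and, hS0,
            _root_.funext_iff, LinearMap.pi_apply, Fin.forall_fin_two,
            Matrix.cons_val_zero, Matrix.cons_val_one, Matrix.head_cons,
            Pi.zero_apply, dotL_apply]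
        rw [hset] at this
        exact this
      have hcast : ((S0.filter fun v => (∑ i, x i * v i) = 0).card : F)
          + ((S0.filter fun v => ¬ (∑ i, x i * v i) = 0).card : F) = (S0.card : F) := by
        exact_mod_cast congrArg (Nat.cast : ℕ → F) hadd
      rw [hc0, hc1] at hcast
      linear_combination hcast
    have hfin := hbij.symm.trans hprod
    rw [hS_S0, hker] at hfin
    linear_combination hfin
  · -- degree bound
    intro s hs i
    have h1 : (s.sum fun _ e => e) ≤ (powerSum (lineFinset ℓ)).totalDegree :=
      le_totalDegree hs
    have h2 : (powerSum (lineFinset ℓ)).totalDegree ≤ q - 1 := by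
      rw [powerSum]
      refine le_trans (totalDegree_finset_sum _ _) (Finset.sup_le fun P _ => ?_)
      refine le_trans (totalDegree_pow _ _) ?_
      have : (redeiFactor P).totalDegree ≤ 1 := by
        rw [redeiFactor]
        refine le_trans (totalDegree_finset_sum _ _) (Finset.sup_le fun i _ => ?_)
        refine le_trans (totalDegree_mul _ _) ?_
        simp [totalDegree_C, totalDegree_X]
      calc (q - 1) * (redeiFactor P).totalDegree ≤ (q - 1) * 1 :=
            Nat.mul_le_mul_left _ this
        _ = q - 1 := Nat.mul_one _
    have h3 : s i ≤ s.sum fun _ e => e := by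
      by_cases h : s i = 0
      · simp [h]
      · rw [Finsupp.sum]
        exact Finset.single_le_sum (fun j _ => Nat.zero_le _) (Finsupp.mem_support_iff.mpr h)
    omega
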